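/- Let f, g ∈ ℂ[x₁,…,xₙ] be polynomials whose highest homogeneous parts f̄ and ḡ are algebraically independent over ℂ, and let G(x,y) ∈ ℂ[x,y] be a nonzero polynomial. Then deg G(f,g) ≥ (deg_y G) · deg g, where deg denotes total degree and deg_y G is the degree of G in the variable y. -/

import Mathlib

open MvPolynomial

/-- The highest homogeneous part of a multivariate polynomial: the sum of all monomials of
maximal total degree. -/
noncomputable def topHomPart {n : ℕ} (f : MvPolynomial (Fin n) ℂ) : MvPolynomial (Fin n) ℂ :=
  homogeneousComponent f.totalDegree f

lemma topHom_diff_lt {n : ℕ} (p : MvPolynomial (Fin n) ℂ) (a : ℕ) (hp : p.totalDegree ≤ a) :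
    p - homogeneousComponent a p = 0 ∨ (p - homogeneousComponent a p).totalDegree < a := by
  by_cases h0 : p - homogeneousComponent a p = 0
  · exact Or.inl h0
  · right
    have key : ∀ m ∈ (p - homogeneousComponent a p).support, (m.sum fun _ e => e) < a := by
      intro m hm
      rw [mem_support_iff, coeff_sub, coeff_homogeneousComponent] at hm
      by_cases hd : m.degree = a
      · simp [hd] at hm
      · have hc : coeff m p ≠ 0 := by simpa [hd] using hm
        have hle : (m.sum fun _ e => e) ≤ a :=
          le_trans (le_totalDegree (mem_support_iff.2 hc)) hp
        have hne : (m.sum fun _ e => e) ≠ a := hd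
        omega
    obtain ⟨m0, hm0⟩ := Finset.nonempty_iff_ne_empty.mpr
      (fun h => h0 (support_eq_empty.mp h))
    have hpos : 0 < a := lt_of_le_of_lt (Nat.zero_le _) (key m0 hm0)
    rw [totalDegree]
    exact Finset.sup_lt_iff hpos |>.mpr key

lemma homComp_mul_top {n : ℕ} (p q : MvPolynomial (Fin n) ℂ) (a b : ℕ)
    (hp : p.totalDegree ≤ a) (hq : q.totalDegree ≤ b) :
    homogeneousComponent (a + b) (p * q) =
      homogeneousComponent a p * homogeneousComponent b q := by
  set pa := homogeneousComponent a p with hpa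
  set qb := homogeneousComponent b q with hqb
  have hpad : pa.totalDegree ≤ a := (homogeneousComponent_isHomogeneous a p).totalDegree_le
  have hqbd : qb.totalDegree ≤ b := (homogeneousComponent_isHomogeneous b q).totalDegree_le
  have hsplit : p * q = pa * qb + (pa * (q - qb) + ((p - pa) * qb + (p - pa) * (q - qb))) := by
    ring
  have h1 : homogeneousComponent (a + b) (pa * (q - qb)) = 0 := by
    rcases topHom_diff_lt q b hq with h | h
    · simp [hqb, h]
    · exact homogeneousComponent_eq_zero _ _
        (lt_of_le_of_lt (totalDegree_mul _ _) (add_lt_add_of_le_of_lt hpad h))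
  have h2 : homogeneousComponent (a + b) ((p - pa) * qb) = 0 := by
    rcases topHom_diff_lt p a hp with h | h
    · simp [hpa, h]
    · exact homogeneousComponent_eq_zero _ _
        (lt_of_le_of_lt (totalDegree_mul _ _) (add_lt_add_of_lt_of_le h hqbd))
  have h3 : homogeneousComponent (a + b) ((p - pa) * (q - qb)) = 0 := by
    rcases topHom_diff_lt p a hp with h | h
    · simp [hpa, h]
    · rcases topHom_diff_lt q b hq with h' | h'
      · simp [hqb, h']
      · exact homogeneousComponent_eq_zero _ _
          (lt_of_le_of_lt (totalDegree_mul _ _) (add_lt_add h h'))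
  have h0 : homogeneousComponent (a + b) (pa * qb) = pa * qb := by
    have hh : pa * qb ∈ homogeneousSubmodule (Fin n) ℂ (a + b) := by
      rw [mem_homogeneousSubmodule]
      exact (homogeneousComponent_isHomogeneous a p).mul (homogeneousComponent_isHomogeneous b q)
    rw [homogeneousComponent_of_mem hh, if_pos rfl]
  rw [hsplit, map_add, map_add, map_add, h0, h1, h2, h3]
  ring

lemma homComp_pow_top {n : ℕ} (p : MvPolynomial (Fin n) ℂ) (i : ℕ) :
    homogeneousComponent (i * p.totalDegree) (p ^ i) = (topHomPart p) ^ i := by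
  induction i with
  | zero => simp [homogeneousComponent_zero]
  | succ i ih =>
    have he : (i + 1) * p.totalDegree = i * p.totalDegree + p.totalDegree := by ring
    rw [he, pow_succ, homComp_mul_top _ _ _ _ (totalDegree_pow p i) le_rfl, ih, pow_succ,
      topHomPart]

lemma homComp_mix {n : ℕ} (f g : MvPolynomial (Fin n) ℂ) (i j : ℕ) :
    homogeneousComponent (i * f.totalDegree + j * g.totalDegree) (f ^ i * g ^ j) =
      (topHomPart f) ^ i * (topHomPart g) ^ j := by
  rw [homComp_mul_top _ _ _ _ (totalDegree_pow f i) (totalDegree_pow g j),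
    homComp_pow_top, homComp_pow_top]

/-- If the highest homogeneous parts of `f, g ∈ ℂ[x₁,…,xₙ]` are algebraically independent and
`G ∈ ℂ[x,y]` is nonzero, then `deg G(f,g) ≥ (deg_y G) · deg g`. -/
theorem totalDegree_comp_ge_degY_mul (n : ℕ) (f g : MvPolynomial (Fin n) ℂ)
    (hind : AlgebraicIndependent ℂ ![topHomPart f, topHomPart g])
    (G : MvPolynomial (Fin 2) ℂ) (hG : G ≠ 0) :
    degreeOf 1 G * g.totalDegree ≤ (aeval ![f, g] G).totalDegree := by
  classical
  set d := f.totalDegree with hd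
  set e := g.totalDegree with he
  set F := topHomPart f with hF
  set Gb := topHomPart g with hGb
  set wdeg : (Fin 2 →₀ ℕ) → ℕ := fun u => u 0 * d + u 1 * e with hwdeg
  set w := G.support.sup wdeg with hw
  have hsupne : G.support.Nonempty :=
    Finset.nonempty_iff_ne_empty.mpr (fun h => hG (support_eq_empty.mp h))
  have haev : ∀ (h1 h2 : MvPolynomial (Fin n) ℂ) (u : Fin 2 →₀ ℕ) (c : ℂ),
      aeval ![h1, h2] (monomial u c) = C c * (h1 ^ u 0 * h2 ^ u 1) := by
    intro h1 h2 u c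
    rw [aeval_monomial, Finsupp.prod_pow, Fin.prod_univ_two]
    simp [algebraMap_eq, mul_assoc]
  set G' : MvPolynomial (Fin 2) ℂ :=
    ∑ u ∈ G.support.filter (fun u => wdeg u = w), monomial u (coeff u G) with hG'
  have hkey : homogeneousComponent w (aeval ![f, g] G) = aeval ![F, Gb] G' := by
    conv_lhs => rw [G.as_sum]
    rw [hG', map_sum, map_sum, map_sum, Finset.sum_filter]
    refine Finset.sum_congr rfl fun u hu => ?_
    rw [haev f g, homogeneousComponent_C_mul]
    by_cases h : wdeg u = w
    · rw [if_pos h, haev F Gb, ← h]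
      congr 1
      exact homComp_mix f g (u 0) (u 1)
    · rw [if_neg h]
      have hlt : wdeg u < w := lt_of_le_of_ne (Finset.le_sup hu) h
      have hdeg : (f ^ u 0 * g ^ u 1).totalDegree < w :=
        lt_of_le_of_lt (le_trans (totalDegree_mul _ _)
          (add_le_add (totalDegree_pow f (u 0)) (totalDegree_pow g (u 1)))) hlt
      rw [homogeneousComponent_eq_zero _ _ hdeg, mul_zero]
  have hG'ne : G' ≠ 0 := by
    obtain ⟨u0, hu0mem, hu0⟩ := G.support.exists_mem_eq_sup hsupne wdeg
    intro h0
    have hcoeff : coeff u0 G' = coeff u0 G := by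
      rw [hG', coeff_sum, Finset.sum_eq_single u0]
      · simp [coeff_monomial]
      · intro b hb hne
        rw [coeff_monomial, if_neg hne]
      · intro hnot
        exact absurd (Finset.mem_filter.mpr ⟨hu0mem, hu0.symm⟩) hnot
    rw [h0] at hcoeff
    exact mem_support_iff.mp hu0mem (by simpa using hcoeff.symm)
  have hinj : Function.Injective (aeval ![F, Gb] : MvPolynomial (Fin 2) ℂ →ₐ[ℂ] _) :=
    algebraicIndependent_iff_injective_aeval.mp hind
  have hne : homogeneousComponent w (aeval ![f, g] G) ≠ 0 := by
    rw [hkey]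
    intro h
    exact hG'ne (hinj (by rw [h, map_zero]))
  have hwle : w ≤ (aeval ![f, g] G).totalDegree := by
    obtain ⟨m, hm⟩ := Finset.nonempty_iff_ne_empty.mpr
      (fun h => hne (support_eq_empty.mp h))
    have h1 := mem_support_iff.mp hm
    rw [coeff_homogeneousComponent] at h1
    split_ifs at h1 with hdm
    · have := le_totalDegree (mem_support_iff.2 h1)
      calc w = m.sum fun _ e => e := by rw [← hdm]; rfl
        _ ≤ _ := this
    · exact absurd rfl h1
  refine le_trans ?_ hwle
  rw [degreeOf_eq_sup]
  obtain ⟨u1, hu1mem, hu1⟩ := G.support.exists_mem_eq_sup hsupne (fun m => m 1)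
  rw [hu1]
  calc u1 1 * e ≤ u1 0 * d + u1 1 * e := Nat.le_add_left _ _
    _ = wdeg u1 := rfl
    _ ≤ w := Finset.le_sup hu1mem
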